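/- arXiv:1311.7455 — 2 statements merged into one kernel-verified Lean document; each statement's English description precedes it below -/
import Mathlib

section
/- Fix j and let c_j be the smallest eigenvalue of X_{-j}'Q_j X_{-j}/n. If γ > 1/c_j, then the profiled semi-penalized criterion b ↦ (1/(2n))‖Q_j(y − X_{-j} b)‖² + Σ_{k≠j} ρ(b_k;λ) is strictly convex on ℝ^{p−1}, and consequently it has at most one global minimizer. -/
open Matrix

/-- The MCP (minimax concave penalty): `ρ(t;λ) = λ ∫₀^{|t|} (1 − u/(γλ))₊ du`. -/
noncomputable def mcp (lam gam t : ℝ) : ℝ :=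
  lam * ∫ u in (0:ℝ)..|t|, max (1 - u / (gam * lam)) 0

section Helpers

lemma intg1 (a s : ℝ) (ha : 0 < a) (h0 : 0 ≤ s) (hs : s ≤ a) :
    ∫ u in (0:ℝ)..s, max (1 - u / a) 0 = s - s^2/(2*a) := by
  have : ∫ u in (0:ℝ)..s, max (1 - u / a) 0 = ∫ u in (0:ℝ)..s, (1 - u / a) := by
    apply intervalIntegral.integral_congr
    intro u hu
    rw [Set.uIcc_of_le h0] at hu
    have : u / a ≤ 1 := by
      rw [div_le_one ha]; exact le_trans hu.2 hs
    simp [max_eq_left, sub_nonneg.2 this]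
  rw [this, intervalIntegral.integral_sub intervalIntegrable_const
    (IntervalIntegrable.div_const intervalIntegral.intervalIntegrable_id a)]
  rw [intervalIntegral.integral_div, integral_id, intervalIntegral.integral_const]
  simp only [smul_eq_mul, mul_one]
  ring

lemma intg2 (a s : ℝ) (ha : 0 < a) (hs : a ≤ s) :
    ∫ u in (0:ℝ)..s, max (1 - u / a) 0 = a/2 := by
  have hcont : Continuous (fun u : ℝ => max (1 - u / a) 0) := by
    continuity
  rw [← intervalIntegral.integral_add_adjacent_intervals
    (hcont.intervalIntegrable 0 a) (hcont.intervalIntegrable a s)]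
  have h1 : ∫ u in (0:ℝ)..a, max (1 - u / a) 0 = a/2 := by
    rw [intg1 a a ha ha.le le_rfl]; field_simp; ring
  have h2 : ∫ u in a..s, max (1 - u / a) 0 = 0 := by
    have : ∫ u in a..s, max (1 - u / a) 0 = ∫ u in a..s, (0:ℝ) := by
      apply intervalIntegral.integral_congr
      intro u hu
      rw [Set.uIcc_of_le hs] at hu
      have : (1:ℝ) ≤ u / a := by rw [le_div_iff₀ ha]; linarith [hu.1]
      simp [max_eq_right, sub_nonpos.2 this]
    simp [this]
  rw [h1, h2]; ring

/-- The "reverse Huber" convex companion of MCP. -/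
noncomputable def berhu (lam gam t : ℝ) : ℝ :=
  lam * |t| + (max (|t| - gam * lam) 0)^2 / (2 * gam)

lemma mcp_eq_berhu (lam gam : ℝ) (hlam : 0 < lam) (hgam : 0 < gam) (t : ℝ) :
    mcp lam gam t = berhu lam gam t - t^2 / (2*gam) := by
  have ha : 0 < gam * lam := mul_pos hgam hlam
  have hts : t^2 = |t|^2 := (sq_abs t).symm
  rcases le_or_gt |t| (gam*lam) with h | h
  · rw [mcp, intg1 _ _ ha (abs_nonneg t) h, berhu,
      max_eq_right (sub_nonpos.2 h)]
    rw [hts]; field_simp; ring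
  · rw [mcp, intg2 _ _ ha h.le, berhu,
      max_eq_left (sub_nonneg.2 h.le)]
    field_simp; ring_nf; simp [sq_abs]

lemma convexOn_abs' : ConvexOn ℝ Set.univ (fun t : ℝ => |t|) := by
  refine ⟨convex_univ, fun x _ y _ a b ha hb hab => ?_⟩
  simp only [smul_eq_mul]
  calc |a * x + b * y| ≤ |a * x| + |b * y| := abs_add_le _ _
    _ = a * |x| + b * |y| := by rw [abs_mul, abs_mul, abs_of_nonneg ha, abs_of_nonneg hb]

lemma sq_comp_convex {m : ℝ → ℝ} (hm : ConvexOn ℝ Set.univ m)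
    (h0 : ∀ t, 0 ≤ m t) : ConvexOn ℝ Set.univ (fun t => (m t)^2) := by
  refine ⟨convex_univ, fun x _ y _ a b ha hb hab => ?_⟩
  have h1 : m (a • x + b • y) ^ 2 ≤ (a * m x + b * m y)^2 := by
    apply pow_le_pow_left₀ (h0 _)
    simpa using hm.2 (Set.mem_univ x) (Set.mem_univ y) ha hb hab
  have h2 : (a * m x + b * m y)^2 ≤ a * (m x)^2 + b * (m y)^2 := by
    nlinarith [sq_nonneg (m x - m y), mul_nonneg ha hb]
  calc m (a • x + b • y) ^ 2 ≤ (a * m x + b * m y)^2 := h1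
    _ ≤ a * (m x)^2 + b * (m y)^2 := h2
    _ = a • (m x)^2 + b • (m y)^2 := by simp [smul_eq_mul]

lemma berhu_convex (lam gam : ℝ) (hlam : 0 < lam) (hgam : 0 < gam) :
    ConvexOn ℝ Set.univ (berhu lam gam) := by
  have h1 : ConvexOn ℝ Set.univ (fun t : ℝ => lam * |t|) := by
    simpa [smul_eq_mul] using convexOn_abs'.smul hlam.le
  have hm : ConvexOn ℝ Set.univ (fun t : ℝ => max (|t| - gam*lam) 0) := by
    have : ConvexOn ℝ Set.univ (fun t : ℝ => |t| - gam*lam) :=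
      convexOn_abs'.sub (concaveOn_const _ convex_univ)
    simpa [Pi.sup_def] using this.sup (convexOn_const 0 convex_univ)
  have hsq := sq_comp_convex hm (fun t => le_max_right _ _)
  have h2 : ConvexOn ℝ Set.univ
      (fun t : ℝ => (max (|t| - gam*lam) 0)^2 / (2*gam)) := by
    have := hsq.smul (c := (2*gam)⁻¹) (by positivity)
    simpa [smul_eq_mul, div_eq_inv_mul] using this
  exact h1.add h2

section Mat
variable {n : ℕ} {ι : Type*} [Fintype ι]

lemma vecMulVec_symm (x : Fin n → ℝ) : (vecMulVec x x)ᵀ = vecMulVec x x := by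
  ext i k; simp [vecMulVec_apply, Matrix.transpose_apply, mul_comm]

lemma vecMulVec_sq (x : Fin n → ℝ) :
    vecMulVec x x * vecMulVec x x = (x ⬝ᵥ x) • vecMulVec x x := by
  ext i k
  simp [Matrix.mul_apply, vecMulVec_apply, dotProduct, Finset.sum_mul, Finset.mul_sum]
  congr 1; ext l; ring

lemma Qsymm (x : Fin n → ℝ) :
    ((1 : Matrix (Fin n) (Fin n) ℝ) - (x ⬝ᵥ x)⁻¹ • vecMulVec x x)ᵀ
      = (1 - (x ⬝ᵥ x)⁻¹ • vecMulVec x x) := by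
  rw [transpose_sub, transpose_one, transpose_smul, vecMulVec_symm]

lemma Qidem (x : Fin n → ℝ) :
    ((1 : Matrix (Fin n) (Fin n) ℝ) - (x ⬝ᵥ x)⁻¹ • vecMulVec x x) *
      (1 - (x ⬝ᵥ x)⁻¹ • vecMulVec x x) = (1 - (x ⬝ᵥ x)⁻¹ • vecMulVec x x) := by
  rcases eq_or_ne (x ⬝ᵥ x) 0 with h | h
  · simp [h]
  · have h2 : ((x ⬝ᵥ x)⁻¹ • vecMulVec x x) * ((x ⬝ᵥ x)⁻¹ • vecMulVec x x)
        = (x ⬝ᵥ x)⁻¹ • vecMulVec x x := by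
      rw [smul_mul_smul_comm, vecMulVec_sq, smul_smul]
      congr 1
      field_simp
    rw [sub_mul, mul_sub, mul_sub, mul_one, h2]
    simp only [one_mul, mul_one]
    abel

lemma proj_quad (Q : Matrix (Fin n) (Fin n) ℝ) (hs : Qᵀ = Q) (hi : Q * Q = Q)
    (w : Fin n → ℝ) :
    (Q.mulVec w) ⬝ᵥ (Q.mulVec w) = w ⬝ᵥ Q.mulVec w := by
  have h1 : (Q.mulVec w) ᵥ* Q = Q.mulVec w := by
    calc (Q.mulVec w) ᵥ* Q = (Q.mulVec w) ᵥ* Qᵀ := by rw [hs]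
      _ = Q.mulVec (Q.mulVec w) := Matrix.vecMul_transpose Q (Q.mulVec w)
      _ = (Q * Q).mulVec w := Matrix.mulVec_mulVec w Q Q
      _ = Q.mulVec w := by rw [hi]
  rw [Matrix.dotProduct_mulVec, h1, dotProduct_comm]

lemma quad_form (A : Matrix (Fin n) ι ℝ) (Q : Matrix (Fin n) (Fin n) ℝ)
    (hs : Qᵀ = Q) (hi : Q * Q = Q) (d : ι → ℝ) :
    (Q.mulVec (A.mulVec d)) ⬝ᵥ (Q.mulVec (A.mulVec d))
      = d ⬝ᵥ (Aᵀ * Q * A).mulVec d := by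
  rw [proj_quad Q hs hi]
  calc (A.mulVec d) ⬝ᵥ Q.mulVec (A.mulVec d)
      = (d ᵥ* Aᵀ) ⬝ᵥ Q.mulVec (A.mulVec d) := by rw [Matrix.vecMul_transpose]
    _ = d ⬝ᵥ Aᵀ.mulVec (Q.mulVec (A.mulVec d)) := (Matrix.dotProduct_mulVec d Aᵀ _).symm
    _ = d ⬝ᵥ (Aᵀ * Q * A).mulVec d := by
        rw [Matrix.mulVec_mulVec, Matrix.mulVec_mulVec, Matrix.mul_assoc]
end Mat

end Helpers

/-- if `γ > 1/c_j`, where `c_j > 0` is the smallest eigenvalue of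
`X_{-j}'Q_jX_{-j}/n` (characterized variationally), then the profiled
semi-penalized criterion `b ↦ (1/(2n))‖Q_j(y − X_{-j}b)‖² + Σ_{k≠j}ρ(b_k;λ)` is
strictly convex on `ℝ^{p−1}`, and hence has at most one global minimizer. -/
theorem stmt_15 {n p : ℕ} (X : Matrix (Fin n) (Fin p) ℝ) (y : Fin n → ℝ)
    (lam gam : ℝ) (hlam : 0 < lam) (hgam : 0 < gam)
    (j : Fin p)
    -- `Q_j = I − x_j(x_j'x_j)⁻¹x_j'`
    (Q : Matrix (Fin n) (Fin n) ℝ)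
    (hQ : Q = 1 - ((fun i => X i j) ⬝ᵥ (fun i => X i j))⁻¹ •
        vecMulVec (fun i => X i j) (fun i => X i j))
    -- `X_{-j}`
    (Xmj : Matrix (Fin n) {k : Fin p // k ≠ j} ℝ)
    (hXmj : Xmj = X.submatrix id (Subtype.val : {k : Fin p // k ≠ j} → Fin p))
    -- `c_j` is the smallest eigenvalue of `X_{-j}'Q_jX_{-j}/n`
    (cj : ℝ) (hcjpos : 0 < cj)
    (hcj_le : ∀ u : {k : Fin p // k ≠ j} → ℝ,
      cj * (u ⬝ᵥ u) ≤ u ⬝ᵥ ((n : ℝ)⁻¹ • (Xmjᵀ * Q * Xmj)).mulVec u)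
    (hcj_attained : ∃ u : {k : Fin p // k ≠ j} → ℝ, u ≠ 0 ∧
      u ⬝ᵥ ((n : ℝ)⁻¹ • (Xmjᵀ * Q * Xmj)).mulVec u = cj * (u ⬝ᵥ u))
    -- `γ > 1/c_j`
    (hconv : gam > 1 / cj)
    -- the profiled criterion `G`
    (G : ({k : Fin p // k ≠ j} → ℝ) → ℝ)
    (hG : ∀ b, G b = (1 / (2 * n)) *
        ∑ i, (Q.mulVec (fun i' => y i' - ∑ k : {k : Fin p // k ≠ j}, X i' k.val * b k) i) ^ 2 +
        ∑ k : {k : Fin p // k ≠ j}, mcp lam gam (b k)) :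
    StrictConvexOn ℝ Set.univ G ∧
    ∀ b₁ b₂ : {k : Fin p // k ≠ j} → ℝ,
      (∀ b, G b₁ ≤ G b) → (∀ b, G b₂ ≤ G b) → b₁ = b₂ := by
  classical
  by_cases hι : Nonempty {k : Fin p // k ≠ j}
  case neg =>
    have heq : ∀ a b : {k : Fin p // k ≠ j} → ℝ, a = b := by
      intro a b; funext k; exact absurd ⟨k⟩ hι
    exact ⟨⟨convex_univ, fun x _ y _ hxy => absurd (heq x y) hxy⟩,
      fun b₁ b₂ _ _ => heq b₁ b₂⟩
  case pos =>
    -- n is positive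
    have hn : (0:ℝ) < n := by
      rcases Nat.eq_zero_or_pos n with h0 | h0
      · exfalso
        subst h0
        have h := hcj_le (fun _ => 1)
        have hM : (Xmjᵀ * Q * Xmj) = 0 := by
          ext i k
          simp [Matrix.mul_apply]
        rw [hM] at h
        simp [dotProduct] at h
        have hcard : 0 < p - 1 := by
          have h1 := Fintype.card_pos_iff.mpr hι
          simpa using h1
        have hcard' : (0:ℝ) < ((p-1 : ℕ) : ℝ) := by exact_mod_cast hcard
        nlinarith
      · exact_mod_cast h0
    have hQs : Qᵀ = Q := by rw [hQ]; exact Qsymm _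
    have hQi : Q * Q = Q := by rw [hQ]; exact Qidem _
    have hgc : 1 < gam * cj := (div_lt_iff₀ hcjpos).mp hconv
    -- key quadratic bound
    have hdbound : ∀ d : {k : Fin p // k ≠ j} → ℝ,
        (n:ℝ) * cj * (d ⬝ᵥ d) ≤ (Q.mulVec (Xmj.mulVec d)) ⬝ᵥ (Q.mulVec (Xmj.mulVec d)) := by
      intro d
      rw [quad_form Xmj Q hQs hQi d]
      have h := hcj_le d
      rw [Matrix.smul_mulVec, dotProduct_smul, smul_eq_mul] at h
      calc (n:ℝ) * cj * (d ⬝ᵥ d) = (n:ℝ) * (cj * (d ⬝ᵥ d)) := by ring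
        _ ≤ (n:ℝ) * ((n:ℝ)⁻¹ * (d ⬝ᵥ (Xmjᵀ * Q * Xmj).mulVec d)) :=
            mul_le_mul_of_nonneg_left h hn.le
        _ = d ⬝ᵥ (Xmjᵀ * Q * Xmj).mulVec d := by field_simp
    -- value of G in terms of berhu
    set cc : ℝ := 1 / (2 * (n:ℝ)) with hcc
    have Gval : ∀ b : {k : Fin p // k ≠ j} → ℝ, G b =
        cc * ∑ i, (Q.mulVec (fun i' => y i' - ∑ k : {k : Fin p // k ≠ j}, X i' k.val * b k) i) ^ 2
        + ∑ k : {k : Fin p // k ≠ j}, berhu lam gam (b k)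
        - (∑ k : {k : Fin p // k ≠ j}, (b k)^2) / (2*gam) := by
      intro b
      rw [hG b, hcc]
      have : ∑ k : {k : Fin p // k ≠ j}, mcp lam gam (b k)
          = ∑ k : {k : Fin p // k ≠ j}, (berhu lam gam (b k) - (b k)^2 / (2*gam)) := by
        exact Finset.sum_congr rfl fun k _ => mcp_eq_berhu lam gam hlam hgam (b k)
      rw [this, Finset.sum_sub_distrib, ← Finset.sum_div]
      ring
    have hGsc : StrictConvexOn ℝ Set.univ G := by
      refine ⟨convex_univ, ?_⟩
      intro P _ Pm _ hne a b ha hb hab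
      have hb' : b = 1 - a := by linarith
      -- the three residual vectors
      set v1 : Fin n → ℝ :=
        Q.mulVec (fun i' => y i' - ∑ k : {k : Fin p // k ≠ j}, X i' k.val * P k) with hv1
      set v2 : Fin n → ℝ :=
        Q.mulVec (fun i' => y i' - ∑ k : {k : Fin p // k ≠ j}, X i' k.val * Pm k) with hv2
      set vm : Fin n → ℝ :=
        Q.mulVec (fun i' => y i' - ∑ k : {k : Fin p // k ≠ j},
          X i' k.val * (a • P + b • Pm) k) with hvm
      have key1 : ∀ i, vm i = a * v1 i + b * v2 i := by
        intro i
        rw [hv1, hv2, hvm]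
        simp only [Matrix.mulVec, dotProduct, Pi.add_apply, Pi.smul_apply, smul_eq_mul]
        rw [Finset.mul_sum, Finset.mul_sum, ← Finset.sum_add_distrib]
        apply Finset.sum_congr rfl
        intro i' _
        have hsum : ∑ k : {k : Fin p // k ≠ j}, X i' k.val * (a * P k + b * Pm k)
            = a * (∑ k : {k : Fin p // k ≠ j}, X i' k.val * P k)
              + b * (∑ k : {k : Fin p // k ≠ j}, X i' k.val * Pm k) := by
          rw [Finset.mul_sum, Finset.mul_sum, ← Finset.sum_add_distrib]
          exact Finset.sum_congr rfl fun k _ => by ring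
        rw [hsum, hb']; ring
      have key2 : ∀ i, v1 i - v2 i
          = (Q.mulVec (Xmj.mulVec (fun k => Pm k - P k))) i := by
        intro i
        rw [hv1, hv2]
        simp only [Matrix.mulVec, dotProduct, hXmj, Matrix.submatrix_apply, id]
        rw [← Finset.sum_sub_distrib]
        apply Finset.sum_congr rfl
        intro i' _
        have hsum : ∑ k : {k : Fin p // k ≠ j}, X i' k.val * (Pm k - P k)
            = (∑ k : {k : Fin p // k ≠ j}, X i' k.val * Pm k)
              - ∑ k : {k : Fin p // k ≠ j}, X i' k.val * P k := by
          rw [← Finset.sum_sub_distrib]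
          exact Finset.sum_congr rfl fun k _ => by ring
        rw [hsum]; ring
      -- scalar sums
      set S1 : ℝ := ∑ i, (v1 i)^2 with hS1
      set S2 : ℝ := ∑ i, (v2 i)^2 with hS2
      set SD : ℝ := ∑ i, (v1 i - v2 i)^2 with hSD
      set TD : ℝ := ∑ k : {k : Fin p // k ≠ j}, (P k - Pm k)^2 with hTD
      -- quadratic expansion of the smooth part
      have f1 : ∑ i, (vm i)^2 = a * S1 + b * S2 - a*b*SD := by
        rw [hS1, hS2, hSD, Finset.mul_sum, Finset.mul_sum, Finset.mul_sum,
          ← Finset.sum_add_distrib, ← Finset.sum_sub_distrib]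
        apply Finset.sum_congr rfl
        intro i _
        rw [key1 i, hb']; ring
      -- quadratic expansion of the penalty quadratic
      have f2 : ∑ k : {k : Fin p // k ≠ j}, ((a • P + b • Pm) k)^2
          = a * (∑ k : {k : Fin p // k ≠ j}, (P k)^2)
            + b * (∑ k : {k : Fin p // k ≠ j}, (Pm k)^2) - a*b*TD := by
        rw [hTD, Finset.mul_sum, Finset.mul_sum, Finset.mul_sum,
          ← Finset.sum_add_distrib, ← Finset.sum_sub_distrib]
        apply Finset.sum_congr rfl
        intro k _
        simp only [Pi.add_apply, Pi.smul_apply, smul_eq_mul]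
        rw [hb']; ring
      -- convexity of the berhu part
      have f3 : ∑ k : {k : Fin p // k ≠ j}, berhu lam gam ((a • P + b • Pm) k)
          ≤ a * (∑ k : {k : Fin p // k ≠ j}, berhu lam gam (P k))
            + b * (∑ k : {k : Fin p // k ≠ j}, berhu lam gam (Pm k)) := by
        rw [Finset.mul_sum, Finset.mul_sum, ← Finset.sum_add_distrib]
        apply Finset.sum_le_sum
        intro k _
        have := (berhu_convex lam gam hlam hgam).2 (Set.mem_univ (P k))
          (Set.mem_univ (Pm k)) ha.le hb.le hab
        simpa [smul_eq_mul] using this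
      -- lower bound on SD
      have f4 : (n:ℝ) * cj * TD ≤ SD := by
        have hdot : SD = (Q.mulVec (Xmj.mulVec (fun k => Pm k - P k)))
            ⬝ᵥ (Q.mulVec (Xmj.mulVec (fun k => Pm k - P k))) := by
          rw [hSD, dotProduct]
          apply Finset.sum_congr rfl
          intro i _
          rw [key2 i]; ring
        have hdot2 : (fun k => Pm k - P k) ⬝ᵥ (fun k => Pm k - P k) = TD := by
          rw [hTD, dotProduct]
          apply Finset.sum_congr rfl
          intro k _
          ring
        rw [hdot, ← hdot2]
        exact hdbound _
      -- positivity of TD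
      have f5 : 0 < TD := by
        rw [hTD]
        have hex : ∃ k : {k : Fin p // k ≠ j}, P k ≠ Pm k := by
          by_contra hcon
          push_neg at hcon
          exact hne (funext hcon)
        obtain ⟨k0, hk0⟩ := hex
        apply Finset.sum_pos' (fun k _ => sq_nonneg _)
        exact ⟨k0, Finset.mem_univ k0, sq_pos_of_ne_zero (sub_ne_zero.mpr hk0)⟩
      -- two auxiliary inequalities
      have habp : 0 < a * b := mul_pos ha hb
      have hc1 : cj/2 * TD ≤ cc * SD := by
        rw [hcc]
        have : (1 / (2 * (n:ℝ))) * ((n:ℝ) * cj * TD) = cj/2 * TD := by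
          field_simp
        rw [← this]
        exact mul_le_mul_of_nonneg_left f4
          (by positivity : (0:ℝ) ≤ 1 / (2 * (n:ℝ)))
      have hhalf : 1/(2*gam) < cj/2 := by
        rw [div_lt_div_iff₀ (by positivity) (by norm_num : (0:ℝ) < 2)]
        nlinarith
      have hc2 : TD / (2*gam) < cj/2 * TD := by
        calc TD/(2*gam) = TD * (1/(2*gam)) := by ring
          _ < TD * (cj/2) := mul_lt_mul_of_pos_left hhalf f5
          _ = cj/2 * TD := by ring
      have h1aux : a*b*(TD/(2*gam)) < a*b*(cc*SD) :=
        calc a*b*(TD/(2*gam)) < a*b*(cj/2*TD) := by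
              exact mul_lt_mul_of_pos_left hc2 habp
          _ ≤ a*b*(cc*SD) := mul_le_mul_of_nonneg_left hc1 habp.le
      -- assemble
      simp only [smul_eq_mul]
      rw [Gval P, Gval Pm, Gval (a • P + b • Pm)]
      rw [← hv1, ← hv2, ← hvm]
      rw [← hS1, ← hS2, f1, f2]
      set B1 : ℝ := ∑ k : {k : Fin p // k ≠ j}, berhu lam gam (P k) with hB1
      set B2 : ℝ := ∑ k : {k : Fin p // k ≠ j}, berhu lam gam (Pm k) with hB2
      set Bm : ℝ := ∑ k : {k : Fin p // k ≠ j}, berhu lam gam ((a • P + b • Pm) k) with hBm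
      set T1 : ℝ := ∑ k : {k : Fin p // k ≠ j}, (P k)^2 with hT1
      set T2 : ℝ := ∑ k : {k : Fin p // k ≠ j}, (Pm k)^2 with hT2
      have hx1 : (a * T1 + b * T2 - a*b*TD) / (2*gam)
          = a * (T1/(2*gam)) + b * (T2/(2*gam)) - a*b*(TD/(2*gam)) := by ring
      rw [hx1]
      linarith [f3, h1aux]
    refine ⟨hGsc, ?_⟩
    intro b₁ b₂ h₁ h₂
    exact hGsc.eq_of_isMinOn (isMinOn_iff.mpr fun b _ => h₁ b)
      (isMinOn_iff.mpr fun b _ => h₂ b) (Set.mem_univ _) (Set.mem_univ _)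
end

section
/- Fix j and suppose γ > 1/c_j, where c_j is the smallest eigenvalue of X_{-j}'Q_j X_{-j}/n (so the profiled criterion G(b) = (1/(2n))‖Q_j(y − X_{-j} b)‖² + Σ_{k≠j} ρ(b_k;λ) is strictly convex). Let b* ∈ ℝ^{p−1} be supported on S_j (i.e., b*_k = 0 for k ∉ S_j) and satisfy: (i) x_k'Q_j(y − X_{-j} b*) = 0 for every k ∈ S_j; (ii) |b*_k| ≥ γλ for every k ∈ S_j; and (iii) max_{k ∉ S_j} |x_k'Q_j(y − X_{-j} b*)|/n < λ. Then b* is the unique global minimizer of G. -/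
open Matrix

lemma hasDerivAt_maxsq (x : ℝ) :
    HasDerivAt (fun x : ℝ => (max x 0)^2) (2 * max x 0) x := by
  rcases lt_trichotomy x 0 with h | h | h
  · have he : (fun x : ℝ => (max x 0)^2) =ᶠ[nhds x] fun _ => 0 := by
      filter_upwards [eventually_lt_nhds h] with z hz
      simp [max_eq_right hz.le]
    rw [max_eq_right h.le]
    simpa using (hasDerivAt_const x (0:ℝ)).congr_of_eventuallyEq he
  · subst h
    rw [hasDerivAt_iff_isLittleO, Asymptotics.isLittleO_iff]
    intro c hc
    filter_upwards [Metric.ball_mem_nhds (0:ℝ) hc] with z hz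
    rw [Metric.mem_ball, Real.dist_eq, sub_zero] at hz
    have h1 : max z 0 ≤ |z| := max_le (le_abs_self z) (abs_nonneg z)
    have h2 : (0:ℝ) ≤ max z 0 := le_max_right _ _
    have hz2 : (max z 0)^2 ≤ c * |z| := by nlinarith [abs_nonneg z]
    simpa [Real.norm_eq_abs, abs_of_nonneg (sq_nonneg (max z (0:ℝ)))] using hz2
  · have he : (fun x : ℝ => (max x 0)^2) =ᶠ[nhds x] fun z => z^2 := by
      filter_upwards [eventually_gt_nhds h] with z hz
      simp [max_eq_left hz.le]
    rw [max_eq_left h.le]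
    have := hasDerivAt_pow 2 x
    norm_num at this
    exact this.congr_of_eventuallyEq he

lemma mcp_closed {lam gam : ℝ} (hlam : 0 < lam) (hgam : 0 < gam) (t : ℝ) :
    mcp lam gam t = gam * lam^2 / 2 - (max (gam*lam - |t|) 0)^2 / (2*gam) := by
  have hc : 0 < gam * lam := mul_pos hgam hlam
  set c := gam * lam with hcdef
  have key : ∀ u : ℝ, max (1 - u / c) 0 = max (c - u) 0 / c := by
    intro u
    have h' : 1 - u/c = (c-u)/c := by field_simp
    rw [h']
    rcases le_total (c - u) 0 with h | h
    · rw [max_eq_right (div_nonpos_of_nonpos_of_nonneg h hc.le), max_eq_right h, zero_div]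
    · rw [max_eq_left (div_nonneg h hc.le), max_eq_left h]
  have hF : ∀ u : ℝ, HasDerivAt (fun u : ℝ => c/2 - (max (c - u) 0)^2 / (2*c))
      (max (1 - u / c) 0) u := by
    intro u
    have h1 : HasDerivAt (fun u : ℝ => c - u) (-1) u := by
      simpa using (hasDerivAt_id' u).const_sub c
    have h2 := (hasDerivAt_maxsq (c - u)).comp u h1
    have h3 := (h2.div_const (2*c)).const_sub (c/2)
    refine h3.congr_deriv ?_
    rw [key u]
    field_simp
  have hint : IntervalIntegrable (fun u => max (1 - u/c) 0) MeasureTheory.volume 0 |t| :=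
    ((continuous_const.sub (continuous_id.div_const c)).max continuous_const).intervalIntegrable _ _
  have hcalc := intervalIntegral.integral_eq_sub_of_hasDerivAt (fun u _ => hF u) hint
  rw [mcp, hcalc]
  simp only [sub_zero]
  rw [max_eq_left hc.le, hcdef]
  field_simp
  ring

lemma mcp_zero (lam gam : ℝ) : mcp lam gam 0 = 0 := by
  simp [mcp]

lemma mcp_ge {lam gam : ℝ} (hlam : 0 < lam) (hgam : 0 < gam) (t : ℝ) :
    lam * |t| - t^2/(2*gam) ≤ mcp lam gam t := by
  rw [mcp_closed hlam hgam]
  set M := max (gam*lam - |t|) 0 with hM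
  have h1 : M^2 ≤ (gam*lam - |t|)^2 := by
    rcases max_choice (gam*lam - |t|) 0 with h | h <;> rw [hM, h] <;> nlinarith [sq_nonneg (gam*lam - |t|)]
  have he : gam * lam^2/2 - M^2/(2*gam) - (lam * |t| - t^2/(2*gam))
      = ((gam*lam - |t|)^2 - M^2)/(2*gam) := by
    field_simp
    rw [← sq_abs t]
    ring
  nlinarith [div_nonneg (sub_nonneg.mpr h1) (by positivity : (0:ℝ) ≤ 2*gam)]

lemma mcp_eq_of_large {lam gam s : ℝ} (hlam : 0 < lam) (hgam : 0 < gam)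
    (hs : gam * lam ≤ |s|) : mcp lam gam s = gam * lam^2 / 2 := by
  rw [mcp_closed hlam hgam, max_eq_right (by linarith)]
  norm_num

lemma mcp_ge_of_large {lam gam s : ℝ} (hlam : 0 < lam) (hgam : 0 < gam)
    (hs : gam * lam ≤ |s|) (b : ℝ) :
    gam * lam^2/2 - (b - s)^2/(2*gam) ≤ mcp lam gam b := by
  rw [mcp_closed hlam hgam]
  set M := max (gam*lam - |b|) 0 with hM
  have habs : M ≤ |b - s| := by
    apply max_le _ (abs_nonneg _)
    have h1 : |s| - |b| ≤ |s - b| := abs_sub_abs_le_abs_sub s b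
    rw [abs_sub_comm] at h1
    linarith
  have h2 : M^2 ≤ (b - s)^2 := by
    nlinarith [le_max_right (gam*lam - |b|) (0:ℝ), sq_abs (b - s), abs_nonneg (b - s)]
  have := (div_le_div_iff_of_pos_right (by positivity : (0:ℝ) < 2*gam)).mpr h2
  linarith

/-- STATEMENT 16: sufficient conditions for a vector `b*` supported on `S_j` to
be the unique global minimizer of the profiled semi-penalized criterion `G`,
assuming `γ > 1/c_j` with `c_j > 0` the smallest eigenvalue of
`X_{-j}'Q_jX_{-j}/n`: (i) the normal equations on `S_j`, (ii) `|b*_k| ≥ γλ` on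
`S_j`, and (iii) `max_{k∉S_j}|x_k'Q_j(y − X_{-j}b*)|/n < λ`. -/
theorem stmt_16 {n p : ℕ} (X : Matrix (Fin n) (Fin p) ℝ) (y : Fin n → ℝ)
    (beta : Fin p → ℝ)
    (lam gam : ℝ) (hlam : 0 < lam) (hgam : 0 < gam)
    (j : Fin p)
    -- `S_j = {k : β_k ≠ 0, k ≠ j}`
    (Sj : Finset (Fin p)) (hSj : ∀ k, k ∈ Sj ↔ beta k ≠ 0 ∧ k ≠ j)
    -- `Q_j = I − x_j(x_j'x_j)⁻¹x_j'`
    (Q : Matrix (Fin n) (Fin n) ℝ)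
    (hQ : Q = 1 - ((fun i => X i j) ⬝ᵥ (fun i => X i j))⁻¹ •
        vecMulVec (fun i => X i j) (fun i => X i j))
    -- `X_{-j}`
    (Xmj : Matrix (Fin n) {k : Fin p // k ≠ j} ℝ)
    (hXmj : Xmj = X.submatrix id (Subtype.val : {k : Fin p // k ≠ j} → Fin p))
    -- `c_j` is the smallest eigenvalue of `X_{-j}'Q_jX_{-j}/n`, with `γ > 1/c_j`
    (cj : ℝ) (hcjpos : 0 < cj)
    (hcj_le : ∀ u : {k : Fin p // k ≠ j} → ℝ,
      cj * (u ⬝ᵥ u) ≤ u ⬝ᵥ ((n : ℝ)⁻¹ • (Xmjᵀ * Q * Xmj)).mulVec u)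
    (hcj_attained : ∃ u : {k : Fin p // k ≠ j} → ℝ, u ≠ 0 ∧
      u ⬝ᵥ ((n : ℝ)⁻¹ • (Xmjᵀ * Q * Xmj)).mulVec u = cj * (u ⬝ᵥ u))
    (hconv : gam > 1 / cj)
    -- the profiled criterion `G`
    (G : ({k : Fin p // k ≠ j} → ℝ) → ℝ)
    (hG : ∀ b, G b = (1 / (2 * n)) *
        ∑ i, (Q.mulVec (fun i' => y i' - ∑ k : {k : Fin p // k ≠ j}, X i' k.val * b k) i) ^ 2 +
        ∑ k : {k : Fin p // k ≠ j}, mcp lam gam (b k))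
    -- `b*` is supported on `S_j` and satisfies (i), (ii), (iii)
    (bstar : {k : Fin p // k ≠ j} → ℝ)
    (hsupp : ∀ k : {k : Fin p // k ≠ j}, k.val ∉ Sj → bstar k = 0)
    (hi : ∀ k : {k : Fin p // k ≠ j}, k.val ∈ Sj →
      (fun i => X i k.val) ⬝ᵥ
        Q.mulVec (fun i' => y i' - ∑ l : {k : Fin p // k ≠ j}, X i' l.val * bstar l) = 0)
    (hii : ∀ k : {k : Fin p // k ≠ j}, k.val ∈ Sj → gam * lam ≤ |bstar k|)
    (hiii : ∀ k : {k : Fin p // k ≠ j}, k.val ∉ Sj →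
      |(fun i => X i k.val) ⬝ᵥ
        Q.mulVec (fun i' => y i' - ∑ l : {k : Fin p // k ≠ j}, X i' l.val * bstar l)| / n < lam) :
    ∀ b : {k : Fin p // k ≠ j} → ℝ, b ≠ bstar → G bstar < G b := by
  classical
  intro b hb
  set v : Fin n → ℝ := fun i => X i j with hv
  set δ : {k : Fin p // k ≠ j} → ℝ := fun k => b k - bstar k with hδ
  have hδne : δ ≠ 0 := by
    intro h
    apply hb
    funext k
    have := congrFun h k
    rw [hδ] at this
    simpa [sub_eq_zero] using this
  have hS0 : 0 ≤ δ ⬝ᵥ δ := Finset.sum_nonneg fun k _ => mul_self_nonneg _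
  have hSpos : 0 < δ ⬝ᵥ δ :=
    hS0.lt_of_ne (Ne.symm (fun h => hδne (dotProduct_self_eq_zero.mp h)))
  -- n ≠ 0
  rcases Nat.eq_zero_or_pos n with hn0 | hn0
  · exfalso
    have h := hcj_le δ
    subst hn0
    simp at h
    nlinarith
  have hn : (0:ℝ) < n := by exact_mod_cast hn0
  have hnne : (n:ℝ) ≠ 0 := hn.ne'
  -- Q acts as projection
  have hQmv : ∀ w : Fin n → ℝ, Q *ᵥ w = w - ((v ⬝ᵥ v)⁻¹ * (v ⬝ᵥ w)) • v := by
    intro w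
    have hVmv : vecMulVec v v *ᵥ w = (v ⬝ᵥ w) • v := by
      funext i
      show ∑ a, vecMulVec v v i a * w a = _
      simp only [vecMulVec_apply, Pi.smul_apply, smul_eq_mul]
      rw [show (v ⬝ᵥ w) * v i = (∑ a, v a * w a) * v i from rfl]
      rw [Finset.sum_mul]
      exact Finset.sum_congr rfl fun a _ => by ring
    rw [hQ, sub_mulVec, one_mulVec, smul_mulVec, hVmv, smul_smul]
  have hvQ : ∀ w : Fin n → ℝ, v ⬝ᵥ (Q *ᵥ w) = 0 := by
    intro w
    rw [hQmv, dotProduct_sub, dotProduct_smul, smul_eq_mul]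
    rcases eq_or_ne (v ⬝ᵥ v) 0 with hs | hs
    · have hv0 : v = 0 := dotProduct_self_eq_zero.mp hs
      rw [hv0]
      simp
    · field_simp
      simp
  have hQproj : ∀ u z : Fin n → ℝ, (Q *ᵥ u) ⬝ᵥ (Q *ᵥ z) = u ⬝ᵥ (Q *ᵥ z) := by
    intro u z
    rw [hQmv u, sub_dotProduct, smul_dotProduct, smul_eq_mul, hvQ z, mul_zero, sub_zero]
  -- notation
  set rst : Fin n → ℝ := fun i' => y i' - ∑ l : {k : Fin p // k ≠ j}, X i' l.val * bstar l
    with hrst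
  set A : Fin n → ℝ := Q.mulVec rst with hA
  set Xd : Fin n → ℝ := Xmj *ᵥ δ with hXd
  set Bv : Fin n → ℝ := Q.mulVec Xd with hBv
  set w : {k : Fin p // k ≠ j} → ℝ := fun k => (fun i => X i k.val) ⬝ᵥ A with hw
  have hw0 : ∀ k : {k : Fin p // k ≠ j}, k.val ∈ Sj → w k = 0 := by
    intro k hk
    rw [hw]
    exact hi k hk
  have hwlt : ∀ k : {k : Fin p // k ≠ j}, k.val ∉ Sj → |w k| / n < lam := by
    intro k hk
    rw [hw]
    exact hiii k hk
  -- decomposition of residual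
  have hsplit : (fun i' => y i' - ∑ k : {k : Fin p // k ≠ j}, X i' k.val * b k)
      = fun i' => rst i' - Xd i' := by
    funext i'
    simp only [hrst, hXd, hXmj, hδ, mulVec, dotProduct, submatrix_apply, id_eq]
    rw [sub_sub, ← Finset.sum_add_distrib]
    congr 1
    exact Finset.sum_congr rfl fun l _ => by ring
  have hpoint : ∀ i, Q.mulVec (fun i' => y i' - ∑ k : {k : Fin p // k ≠ j}, X i' k.val * b k) i
      = A i - Bv i := by
    intro i
    rw [hsplit]
    have h := congrFun (mulVec_sub Q rst Xd) i
    rw [hA, hBv]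
    exact h
  have hGb : G b = (1/(2*(n:ℝ))) * ∑ i, (A i - Bv i)^2 + ∑ k, mcp lam gam (b k) := by
    rw [hG b]
    simp only [hpoint]
  have hGstar : G bstar = (1/(2*(n:ℝ))) * ∑ i, (A i)^2 + ∑ k, mcp lam gam (bstar k) := by
    rw [hG bstar]
  -- quadratic expansion
  have hexp : ∑ i, (A i - Bv i)^2 = ∑ i, (A i)^2 - 2 * (A ⬝ᵥ Bv) + Bv ⬝ᵥ Bv := by
    have h1 : ∀ i ∈ Finset.univ, (A i - Bv i)^2
        = (A i)^2 - 2*(A i * Bv i) + Bv i * Bv i := fun i _ => by ring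
    rw [Finset.sum_congr rfl h1, Finset.sum_add_distrib, Finset.sum_sub_distrib,
      ← Finset.mul_sum]
    rfl
  -- dot product identities
  have hdotX : ∀ z : Fin n → ℝ, (Xmj *ᵥ δ) ⬝ᵥ z = δ ⬝ᵥ (Xmjᵀ *ᵥ z) := by
    intro z
    rw [dotProduct_comm, dotProduct_mulVec, ← mulVec_transpose, dotProduct_comm]
  have hXtA : ∀ z : Fin n → ℝ, Xmjᵀ *ᵥ z = fun k => (fun i => X i k.val) ⬝ᵥ z := by
    intro z
    funext k
    simp [hXmj, mulVec, dotProduct, transpose_apply, submatrix_apply]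
  have hAB : A ⬝ᵥ Bv = ∑ k, δ k * w k := by
    rw [dotProduct_comm, hBv, hA, hQproj Xd rst, hXd, hdotX, hXtA]
    rw [hw, ← hA]
    rfl
  have hBB : Bv ⬝ᵥ Bv = δ ⬝ᵥ (Xmjᵀ *ᵥ Bv) := by
    conv_lhs => rw [hBv, hQproj Xd Xd]
    rw [hXd, hdotX]
  have hcjBB : cj * (δ ⬝ᵥ δ) ≤ (n:ℝ)⁻¹ * (Bv ⬝ᵥ Bv) := by
    have h := hcj_le δ
    rw [smul_mulVec, dotProduct_smul, smul_eq_mul] at h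
    rw [← mulVec_mulVec, ← mulVec_mulVec] at h
    rw [hBB, hBv, hXd]
    exact h
  -- per-coordinate penalty bound
  have hTk : ∀ k ∈ Finset.univ, -((δ k)^2/(2*gam))
      ≤ mcp lam gam (b k) - mcp lam gam (bstar k) - (1/(n:ℝ)) * (δ k * w k) := by
    intro k _
    by_cases hk : k.val ∈ Sj
    · rw [hw0 k hk, mul_zero, mul_zero, sub_zero]
      rw [mcp_eq_of_large hlam hgam (hii k hk)]
      have h5 := mcp_ge_of_large hlam hgam (hii k hk) (b k)
      have hδk : δ k = b k - bstar k := by rw [hδ]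
      rw [hδk]
      linarith [h5]
    · have hb0 : bstar k = 0 := hsupp k hk
      have hδk : δ k = b k := by simp [hδ, hb0]
      rw [hb0, mcp_zero, sub_zero, hδk]
      have hm := mcp_ge hlam hgam (b k)
      have e1 : (1/(n:ℝ)) * (b k * w k) ≤ (1/(n:ℝ)) * (|b k| * |w k|) := by
        apply mul_le_mul_of_nonneg_left _ (by positivity)
        calc b k * w k ≤ |b k * w k| := le_abs_self _
          _ = |b k| * |w k| := abs_mul _ _
      have e2 : (1/(n:ℝ)) * (|b k| * |w k|) = |b k| * (|w k| / n) := by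
        field_simp
      have e3 : |b k| * (|w k|/(n:ℝ)) ≤ |b k| * lam :=
        mul_le_mul_of_nonneg_left (hwlt k hk).le (abs_nonneg _)
      linarith [hm, e1, e3]
  have hsum : ∑ k, (-((δ k)^2/(2*gam)))
      ≤ ∑ k, (mcp lam gam (b k) - mcp lam gam (bstar k) - (1/(n:ℝ)) * (δ k * w k)) :=
    Finset.sum_le_sum hTk
  have hsum1 : ∑ k, (-((δ k)^2/(2*gam))) = -(1/(2*gam)) * (δ ⬝ᵥ δ) := by
    simp only [dotProduct, Finset.mul_sum]
    exact Finset.sum_congr rfl fun k _ => by ring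
  have hsum2 : ∑ k, (mcp lam gam (b k) - mcp lam gam (bstar k) - (1/(n:ℝ)) * (δ k * w k))
      = ∑ k, mcp lam gam (b k) - ∑ k, mcp lam gam (bstar k) - (1/(n:ℝ)) * ∑ k, (δ k * w k) := by
    rw [Finset.sum_sub_distrib, Finset.sum_sub_distrib, ← Finset.mul_sum]
  -- assemble
  have hdiff : G b - G bstar
      = (1/(2*(n:ℝ))) * (Bv ⬝ᵥ Bv) - (1/(n:ℝ)) * ∑ k, (δ k * w k)
        + (∑ k, mcp lam gam (b k) - ∑ k, mcp lam gam (bstar k)) := by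
    rw [hGb, hGstar, hexp, hAB]
    field_simp
    ring
  have hq : cj/2 * (δ ⬝ᵥ δ) ≤ (1/(2*(n:ℝ))) * (Bv ⬝ᵥ Bv) := by
    have : (1/(2*(n:ℝ))) * (Bv ⬝ᵥ Bv) = (1/2) * ((n:ℝ)⁻¹ * (Bv ⬝ᵥ Bv)) := by
      field_simp
    rw [this]
    linarith [hcjBB]
  have h1g : 1/gam < cj := by
    rw [div_lt_iff₀ hgam]
    rw [gt_iff_lt, div_lt_iff₀ hcjpos] at hconv
    linarith [mul_comm gam cj]
  have hpen : -(1/(2*gam)) * (δ ⬝ᵥ δ)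
      ≤ ∑ k, mcp lam gam (b k) - ∑ k, mcp lam gam (bstar k) - (1/(n:ℝ)) * ∑ k, (δ k * w k) := by
    rw [← hsum2, ← hsum1]
    exact hsum
  have hkey : 0 < cj/2 * (δ ⬝ᵥ δ) - 1/(2*gam) * (δ ⬝ᵥ δ) := by
    have h3 : 0 < cj - 1/gam := by linarith
    have h4 : 0 < (cj - 1/gam) * (δ ⬝ᵥ δ) := mul_pos h3 hSpos
    have h5 : cj/2 * (δ ⬝ᵥ δ) - 1/(2*gam) * (δ ⬝ᵥ δ) = ((cj - 1/gam) * (δ ⬝ᵥ δ))/2 := by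
      ring
    rw [h5]
    linarith [h4]
  have hfinal : 0 < G b - G bstar := by
    linarith [hq, hpen, hdiff, hkey]
  linarith
end
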